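/- Let O be a finitely generated residually nilpotent semigroup (or associative algebra). Then O has finite coclass if and only if there exists i ∈ ℕ such that |O^j \ O^{j+1}| = 1 (respectively dim(O^j/O^{j+1}) = 1) for all j ≥ i. -/
import Mathlib

/-- `sgPow S i` is the set `Sⁱ` of all products of `i` elements of `S`
(with the convention `S⁰ = S¹ = S`). -/
def sgPow (S : Type*) [Mul S] : ℕ → Set S
  | 0 => Set.univ
  | 1 => Set.univ
  | n + 2 => Set.image2 (· * ·) (sgPow S (n + 1)) Set.univ

/-- A semigroup with zero is nilpotent of class `c` if `S^(c+1) = {0}` and `S^c ≠ {0}`. -/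
def IsNilpotentOfClass (S : Type*) [SemigroupWithZero S] (c : ℕ) : Prop :=
  sgPow S (c + 1) = {0} ∧ sgPow S c ≠ {0}

/-- `mpow x i` is the power `xⁱ` in a magma, for `i ≥ 1` (with `mpow x 0 = x` by convention). -/
def mpow {S : Type*} [Mul S] (x : S) : ℕ → S
  | 0 => x
  | 1 => x
  | n + 2 => mpow x (n + 1) * x
/-- A semigroup is finitely generated if it is generated by a finite set. -/
def FGSemigroup (S : Type*) [Mul S] : Prop :=
  ∃ F : Finset S, Subsemigroup.closure (F : Set S) = ⊤

/-- A semigroup with zero is residually nilpotent if the intersection of its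
power ideals is `{0}`. -/
def ResiduallyNilpotent (S : Type*) [SemigroupWithZero S] : Prop :=
  ⋂ i, sgPow S (i + 1) = {0}

/-- The coclass of the nilpotent quotient `S/Sⁱ`: its number of non-zero elements,
`|S \ Sⁱ|`, minus its class `i - 1`. -/
noncomputable def ccQuot (S : Type*) [SemigroupWithZero S] (i : ℕ) : ℕ :=
  (Set.univ \ sgPow S i).ncard - (i - 1)

/-- A finitely generated residually nilpotent semigroup has coclass `r` if the coclasses
of its nilpotent quotients `S/Sⁱ` converge to `r`. -/
def HasCoclassSg (S : Type*) [SemigroupWithZero S] (r : ℕ) : Prop :=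
  ∀ᶠ i in Filter.atTop, ccQuot S i = r
section AlgebraDefs

variable (K : Type*) [Field K] (A : Type*) [NonUnitalRing A] [Module K A]
  [SMulCommClass K A A] [IsScalarTower K A A]

/-- `algPow K A i` is the submodule `Aⁱ` spanned by all products of `i` elements
(with `A⁰ = A¹ = A`). -/
def algPow : ℕ → Submodule K A
  | 0 => ⊤
  | 1 => ⊤
  | n + 2 => Submodule.span K (Set.image2 (· * ·) ((algPow (n + 1) : Submodule K A) : Set A) Set.univ)

/-- The dimension of the layer `Aⁱ/Aⁱ⁺¹`. -/
noncomputable def algLayerDim (i : ℕ) : ℕ :=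
  Module.finrank K
    (↥(algPow K A i) ⧸ (algPow K A (i + 1)).comap (algPow K A i).subtype)

/-- The coclass of the nilpotent quotient `A/Aⁱ`, namely `dim (A/Aⁱ) - (i - 1)`. -/
noncomputable def algCcQuot (i : ℕ) : ℕ :=
  Module.finrank K (A ⧸ algPow K A i) - (i - 1)

/-- A finitely generated residually nilpotent algebra has coclass `r` if the coclasses
of its nilpotent quotients `A/Aⁱ` converge to `r`. -/
def HasCoclassAlg (r : ℕ) : Prop :=
  ∀ᶠ i in Filter.atTop, algCcQuot K A i = r

/-- The two-sided annihilator of an algebra, as a submodule. -/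
def twoSidedAnn : Submodule K A where
  carrier := {a | (∀ b, a * b = 0) ∧ ∀ b, b * a = 0}
  add_mem' := by
    intro a b ha hb
    exact ⟨fun c => by rw [add_mul, ha.1 c, hb.1 c, add_zero],
           fun c => by rw [mul_add, ha.2 c, hb.2 c, add_zero]⟩
  zero_mem' := ⟨fun b => zero_mul b, fun b => mul_zero b⟩
  smul_mem' := by
    intro k a ha
    exact ⟨fun b => by rw [smul_mul_assoc, ha.1 b, smul_zero],
           fun b => by rw [mul_smul_comm, ha.2 b, smul_zero]⟩

/-- The right annihilator of an algebra, as a submodule. -/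
def rightAnn : Submodule K A where
  carrier := {a | ∀ b, b * a = 0}
  add_mem' := by
    intro a b ha hb c
    rw [mul_add, ha c, hb c, add_zero]
  zero_mem' := fun b => mul_zero b
  smul_mem' := by
    intro k a ha b
    rw [mul_smul_comm, ha b, smul_zero]

end AlgebraDefs

/-- `IsContractedAlgebra K f` asserts that `f : S → A` exhibits the algebra `A` as the
contracted semigroup algebra of the semigroup-with-zero `S` over the field `K`:
`f` is multiplicative, sends zero to zero, and the images of the non-zero elements
of `S` form a `K`-basis of `A`. -/
def IsContractedAlgebra (K : Type*) [Field K] {S A : Type*} [SemigroupWithZero S]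
    [NonUnitalRing A] [Module K A] (f : S → A) : Prop :=
  f 0 = 0 ∧ (∀ s t : S, f (s * t) = f s * f t) ∧
  LinearIndependent K (fun s : {s : S // s ≠ 0} => f s.1) ∧
  Submodule.span K (Set.range fun s : {s : S // s ≠ 0} => f s.1) = ⊤
set_option linter.unusedSectionVars false

section SgAux
variable {S : Type*} [Semigroup S]

/-- Products of exactly `n+1` elements of `F`. -/
def prodSet (F : Set S) : ℕ → Set S
  | 0 => F
  | n + 1 => Set.image2 (· * ·) (prodSet F n) F

lemma prodSet_finite {F : Set S} (hF : F.Finite) : ∀ n, (prodSet F n).Finite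
  | 0 => hF
  | n + 1 => Set.Finite.image2 _ (prodSet_finite hF n) hF

lemma mul_mem_prodSet {F : Set S} :
    ∀ {n m : ℕ} {a b : S}, a ∈ prodSet F m → b ∈ prodSet F n →
      a * b ∈ prodSet F (m + n + 1)
  | 0, m, a, b, ha, hb => Set.mem_image2_of_mem ha hb
  | n + 1, m, a, b, ha, hb => by
    obtain ⟨b', hb', f, hf, rfl⟩ := hb
    have : a * (b' * f) = (a * b') * f := (mul_assoc a b' f).symm
    rw [this]
    have h2 : a * b' ∈ prodSet F (m + n + 1) := mul_mem_prodSet ha hb'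
    have : m + (n + 1) + 1 = (m + n + 1) + 1 := by omega
    rw [this]
    exact Set.mem_image2_of_mem h2 hf

lemma closure_subset_iUnion_prodSet (F : Set S) :
    (Subsemigroup.closure F : Set S) ⊆ ⋃ n, prodSet F n := by
  have : Subsemigroup.closure F ≤
      { carrier := ⋃ n, prodSet F n
        mul_mem' := by
          rintro a b ha hb
          simp only [Set.mem_iUnion] at *
          obtain ⟨m, hm⟩ := ha
          obtain ⟨n, hn⟩ := hb
          exact ⟨m + n + 1, mul_mem_prodSet hm hn⟩ } := by
    rw [Subsemigroup.closure_le]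
    intro x hx
    exact Set.mem_iUnion.mpr ⟨0, hx⟩
  exact this

lemma sgPow_succ_succ (n : ℕ) :
    sgPow S (n + 2) = Set.image2 (· * ·) (sgPow S (n + 1)) Set.univ := rfl

lemma sgPow_succ_eq {n : ℕ} (h : 1 ≤ n) :
    sgPow S (n + 1) = Set.image2 (· * ·) (sgPow S n) Set.univ := by
  obtain ⟨m, rfl⟩ : ∃ m, n = m + 1 := ⟨n - 1, by omega⟩
  rfl

lemma sgPow_succ_subset : ∀ n, sgPow S (n + 1) ⊆ sgPow S n
  | 0 => Set.subset_univ _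
  | 1 => Set.subset_univ _
  | n + 2 => by
    rw [sgPow_succ_succ, sgPow_succ_succ]
    exact Set.image2_subset (sgPow_succ_subset (n + 1)) subset_rfl

lemma sgPow_antitone : Antitone (sgPow S) :=
  antitone_nat_of_succ_le sgPow_succ_subset

lemma prodSet_subset_sgPow (F : Set S) : ∀ n, prodSet F n ⊆ sgPow S (n + 1)
  | 0 => Set.subset_univ _
  | n + 1 => by
    rw [sgPow_succ_succ]
    exact Set.image2_subset (prodSet_subset_sgPow F n) (Set.subset_univ _)

lemma sgPow_stab {j : ℕ} (hj : 1 ≤ j) (h : sgPow S (j + 1) = sgPow S j) :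
    ∀ k, sgPow S (j + k) = sgPow S j
  | 0 => rfl
  | k + 1 => by
    have hk := sgPow_stab hj h k
    have h1 : 1 ≤ j + k := by omega
    have : j + (k + 1) = (j + k) + 1 := by omega
    rw [this, sgPow_succ_eq h1, hk, ← sgPow_succ_eq hj, h]

lemma compl_sgPow_finite (hFG : ∃ F : Finset S, Subsemigroup.closure (F : Set S) = ⊤)
    (i : ℕ) : (Set.univ \ sgPow S i).Finite := by
  obtain ⟨F, hF⟩ := hFG
  apply Set.Finite.subset
    (Set.Finite.biUnion (Set.finite_Iio i) (fun n _ => prodSet_finite F.finite_toSet n))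
  intro s hs
  have hs' : s ∉ sgPow S i := hs.2
  have : s ∈ Subsemigroup.closure (F : Set S) := by rw [hF]; trivial
  obtain ⟨n, hn⟩ := Set.mem_iUnion.mp (closure_subset_iUnion_prodSet _ this)
  by_cases hni : i ≤ n + 1
  · exact absurd (sgPow_antitone hni (prodSet_subset_sgPow _ n hn)) hs'
  · exact Set.mem_biUnion (show n ∈ Set.Iio i by simp; omega) hn

end SgAux

section SgMain
variable {S : Type*} [SemigroupWithZero S] [Infinite S]

lemma sgPow_strict (hFG : FGSemigroup S) (hRN : ResiduallyNilpotent S) {j : ℕ}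
    (hj : 1 ≤ j) : sgPow S (j + 1) ≠ sgPow S j := by
  intro h
  have hall := sgPow_stab hj h
  have hz : sgPow S j = {0} := by
    apply subset_antisymm
    · intro x hx
      rw [← hRN]
      refine Set.mem_iInter.mpr fun i => ?_
      by_cases hij : i + 1 ≤ j
      · exact sgPow_antitone hij hx
      · have : i + 1 = j + (i + 1 - j) := by omega
        rw [this, hall]; exact hx
    · rw [← hRN]
      have h2 := Set.iInter_subset (fun i => sgPow S (i + 1)) (j - 1)
      rwa [Nat.sub_add_cancel hj] at h2
  have hfin := compl_sgPow_finite hFG j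
  rw [hz] at hfin
  have : (Set.univ : Set S).Finite := by
    have := hfin.insert (0 : S)
    apply this.subset
    intro x _
    by_cases hx : x = 0 <;> simp [hx]
  exact Set.infinite_univ this

lemma sg_d_succ (hFG : FGSemigroup S) (j : ℕ) :
    (Set.univ \ sgPow S (j + 1)).ncard =
      (Set.univ \ sgPow S j).ncard + (sgPow S j \ sgPow S (j + 1)).ncard := by
  have hsub := sgPow_succ_subset (S := S) j
  have hset : Set.univ \ sgPow S (j + 1) =
      (Set.univ \ sgPow S j) ∪ (sgPow S j \ sgPow S (j + 1)) := by
    ext x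
    have := @hsub x
    simp only [Set.mem_diff, Set.mem_univ, true_and, Set.mem_union]
    tauto
  rw [hset]
  refine Set.ncard_union_eq ?_ (compl_sgPow_finite hFG j)
    ((compl_sgPow_finite hFG (j + 1)).subset fun x hx => ⟨trivial, hx.2⟩)
  rw [Set.disjoint_left]
  rintro x hx hx2
  exact hx.2 hx2.1

lemma sg_layer_pos (hFG : FGSemigroup S) (hRN : ResiduallyNilpotent S) {j : ℕ}
    (hj : 1 ≤ j) : 1 ≤ (sgPow S j \ sgPow S (j + 1)).ncard := by
  have hne : (sgPow S j \ sgPow S (j + 1)).Nonempty := by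
    rw [Set.nonempty_iff_ne_empty]
    intro h
    refine sgPow_strict hFG hRN hj (subset_antisymm (sgPow_succ_subset j) ?_)
    intro x hx
    by_contra hx2
    exact absurd h (Set.nonempty_iff_ne_empty.mp ⟨x, hx, hx2⟩)
  have hfin : (sgPow S j \ sgPow S (j + 1)).Finite :=
    (compl_sgPow_finite hFG (j + 1)).subset fun x hx => ⟨trivial, hx.2⟩
  exact (Set.ncard_pos hfin).mpr hne

lemma sg_d_lb (hFG : FGSemigroup S) (hRN : ResiduallyNilpotent S) :
    ∀ j, j - 1 ≤ (Set.univ \ sgPow S j).ncard := by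
  intro j
  induction j with
  | zero => omega
  | succ j ih =>
    rcases Nat.eq_zero_or_pos j with h | h
    · omega
    · have := sg_layer_pos hFG hRN h
      have := sg_d_succ (S := S) hFG j
      omega

lemma sg_iff (hFG : FGSemigroup S) (hRN : ResiduallyNilpotent S) :
    (∃ r, HasCoclassSg S r) ↔
      ∃ i, ∀ j, i ≤ j → (sgPow S j \ sgPow S (j + 1)).ncard = 1 := by
  constructor
  · rintro ⟨r, hr⟩
    rw [HasCoclassSg, Filter.eventually_atTop] at hr
    obtain ⟨i0, hi0⟩ := hr
    refine ⟨max i0 1, fun j hj => ?_⟩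
    have e1 : ccQuot S j = r := hi0 j (by omega)
    have e2 : ccQuot S (j + 1) = r := hi0 (j + 1) (by omega)
    simp only [ccQuot] at e1 e2
    have lb1 := sg_d_lb hFG hRN j
    have lb2 := sg_d_lb hFG hRN (j + 1)
    have hd := sg_d_succ (S := S) hFG j
    omega
  · rintro ⟨i, hi⟩
    refine ⟨ccQuot S (max i 1), ?_⟩
    rw [HasCoclassSg, Filter.eventually_atTop]
    refine ⟨max i 1, fun j hj => ?_⟩
    have key : ∀ k, ccQuot S (max i 1 + k) = ccQuot S (max i 1) := by
      intro k
      induction k with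
      | zero => rfl
      | succ k ih =>
        have hd := sg_d_succ (S := S) hFG (max i 1 + k)
        have hl := hi (max i 1 + k) (by omega)
        rw [← ih]
        simp only [ccQuot]
        have : max i 1 + (k + 1) = (max i 1 + k) + 1 := by omega
        rw [this]
        omega
    have : j = max i 1 + (j - max i 1) := by omega
    rw [this, key]

end SgMain

section AlgMain

variable (K : Type*) [Field K] (A : Type*) [NonUnitalRing A] [Module K A]
  [SMulCommClass K A A] [IsScalarTower K A A]

lemma algPow_succ_succ (n : ℕ) : algPow K A (n + 2) =
    Submodule.span K (Set.image2 (· * ·) ((algPow K A (n + 1) : Submodule K A) : Set A) Set.univ) := rfl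

lemma algPow_succ_le : ∀ n, algPow K A (n + 1) ≤ algPow K A n
  | 0 => le_top
  | 1 => le_top
  | n + 2 => by
    rw [algPow_succ_succ, algPow_succ_succ]
    exact Submodule.span_mono (Set.image2_subset (algPow_succ_le (n + 1)) subset_rfl)

lemma algPow_anti : Antitone (algPow K A) :=
  antitone_nat_of_succ_le (algPow_succ_le K A)

lemma algPow_succ_eq {n : ℕ} (h : 1 ≤ n) : algPow K A (n + 1) =
    Submodule.span K (Set.image2 (· * ·) ((algPow K A n : Submodule K A) : Set A) Set.univ) := by
  obtain ⟨m, rfl⟩ : ∃ m, n = m + 1 := ⟨n - 1, by omega⟩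
  rfl

lemma algPow_stab {j : ℕ} (hj : 1 ≤ j) (h : algPow K A (j + 1) = algPow K A j) :
    ∀ k, algPow K A (j + k) = algPow K A j
  | 0 => rfl
  | k + 1 => by
    have hk := algPow_stab hj h k
    have h1 : 1 ≤ j + k := by omega
    have he : j + (k + 1) = (j + k) + 1 := by omega
    rw [he, algPow_succ_eq K A h1, hk, ← algPow_succ_eq K A hj, h]

lemma prodSet_subset_algPow (F : Set A) : ∀ n, prodSet F n ⊆ (algPow K A (n + 1) : Set A)
  | 0 => fun x _ => Submodule.mem_top
  | n + 1 => by
    rintro _ ⟨a, ha, f, _, rfl⟩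
    exact Submodule.subset_span
      (Set.mem_image2_of_mem (prodSet_subset_algPow F n ha) trivial)

lemma quot_finite (hFG : ∃ F : Finset A, NonUnitalAlgebra.adjoin K (F : Set A) = ⊤)
    (i : ℕ) : Module.Finite K (A ⧸ algPow K A i) := by
  obtain ⟨F, hF⟩ := hFG
  set T : Set A := ⋃ n ∈ Set.Iio i, prodSet (F : Set A) n with hT
  have hTfin : T.Finite :=
    Set.Finite.biUnion (Set.finite_Iio i) (fun n _ => prodSet_finite F.finite_toSet n)
  have hspan : (⊤ : Submodule K A) ≤ Submodule.span K T ⊔ algPow K A i := by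
    have h1 : Submodule.span K ((Subsemigroup.closure (F : Set A) : Subsemigroup A) : Set A) = ⊤ := by
      rw [← NonUnitalAlgebra.adjoin_eq_span, hF, NonUnitalAlgebra.top_toSubmodule]
    rw [← h1, Submodule.span_le]
    intro x hx
    obtain ⟨n, hn⟩ := Set.mem_iUnion.mp (closure_subset_iUnion_prodSet _ hx)
    by_cases hni : i ≤ n + 1
    · exact Submodule.mem_sup_right
        (algPow_anti K A hni (prodSet_subset_algPow K A _ n hn))
    · exact Submodule.mem_sup_left (Submodule.subset_span
        (Set.mem_biUnion (show n ∈ Set.Iio i by simp only [Set.mem_Iio]; omega) hn))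
  rw [Module.finite_def]
  have htop : (⊤ : Submodule K (A ⧸ algPow K A i)) =
      Submodule.span K ((algPow K A i).mkQ '' T) := by
    apply le_antisymm ?_ le_top
    rw [← Submodule.map_span]
    intro x _
    obtain ⟨a, rfl⟩ := (algPow K A i).mkQ_surjective x
    obtain ⟨t, ht, b, hb, rfl⟩ := Submodule.mem_sup.mp (hspan (Submodule.mem_top (x := a)))
    have hb0 : (algPow K A i).mkQ b = 0 := by
      rw [Submodule.mkQ_apply, Submodule.Quotient.mk_eq_zero]
      exact hb
    rw [map_add, hb0, add_zero]
    exact Submodule.mem_map_of_mem ht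
  rw [htop]
  exact Submodule.fg_def.mpr ⟨_, hTfin.image _, rfl⟩

lemma alg_layer_eq (i : ℕ) : algLayerDim K A i =
    Module.finrank K ↥(Submodule.map (algPow K A (i + 1)).mkQ (algPow K A i)) := by
  set f : ↥(algPow K A i) →ₗ[K] A ⧸ algPow K A (i + 1) :=
    (algPow K A (i + 1)).mkQ ∘ₗ (algPow K A i).subtype with hf
  have hker : LinearMap.ker f = (algPow K A (i + 1)).comap (algPow K A i).subtype := by
    rw [hf, LinearMap.ker_comp, Submodule.ker_mkQ]
  have hrange : LinearMap.range f = Submodule.map (algPow K A (i + 1)).mkQ (algPow K A i) := by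
    rw [hf, LinearMap.range_comp, Submodule.range_subtype]
  have e2 : (↥(algPow K A i) ⧸ (algPow K A (i + 1)).comap (algPow K A i).subtype) ≃ₗ[K]
      ↥(Submodule.map (algPow K A (i + 1)).mkQ (algPow K A i)) :=
    (Submodule.quotEquivOfEq _ _ hker.symm).trans
      ((LinearMap.quotKerEquivRange f).trans (LinearEquiv.ofEq _ _ hrange))
  exact e2.finrank_eq

lemma alg_d_succ (hFG : ∃ F : Finset A, NonUnitalAlgebra.adjoin K (F : Set A) = ⊤) (i : ℕ) :
    Module.finrank K (A ⧸ algPow K A (i + 1)) =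
      Module.finrank K (A ⧸ algPow K A i) + algLayerDim K A i := by
  haveI : Module.Finite K (A ⧸ algPow K A (i + 1)) := quot_finite K A hFG (i + 1)
  have e1 : ((A ⧸ algPow K A (i + 1)) ⧸
        Submodule.map (algPow K A (i + 1)).mkQ (algPow K A i)) ≃ₗ[K] A ⧸ algPow K A i :=
    Submodule.quotientQuotientEquivQuotient _ _ (algPow_succ_le K A i)
  have hfr := Submodule.finrank_quotient_add_finrank
    (Submodule.map (algPow K A (i + 1)).mkQ (algPow K A i))
  rw [e1.finrank_eq, ← alg_layer_eq] at hfr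
  omega

lemma alg_layer_pos (hNF : ¬ Module.Finite K A)
    (hFG : ∃ F : Finset A, NonUnitalAlgebra.adjoin K (F : Set A) = ⊤)
    (hRN : ⨅ i, algPow K A (i + 1) = ⊥) {j : ℕ} (hj : 1 ≤ j) :
    1 ≤ algLayerDim K A j := by
  by_contra h
  have h0 : algLayerDim K A j = 0 := by omega
  rw [alg_layer_eq] at h0
  haveI : Module.Finite K (A ⧸ algPow K A (j + 1)) := quot_finite K A hFG (j + 1)
  have hp : Submodule.map (algPow K A (j + 1)).mkQ (algPow K A j) = ⊥ :=
    Submodule.finrank_eq_zero.mp h0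
  have hle : algPow K A j ≤ algPow K A (j + 1) := by
    intro x hx
    have hx2 : (algPow K A (j + 1)).mkQ x ∈
        Submodule.map (algPow K A (j + 1)).mkQ (algPow K A j) :=
      Submodule.mem_map_of_mem hx
    rw [hp, Submodule.mem_bot] at hx2
    rwa [Submodule.mkQ_apply, Submodule.Quotient.mk_eq_zero] at hx2
  have heq : algPow K A (j + 1) = algPow K A j :=
    le_antisymm (algPow_succ_le K A j) hle
  have hall := algPow_stab K A hj heq
  have hbot : algPow K A j = ⊥ := by
    rw [← hRN]
    apply le_antisymm
    · refine le_iInf fun i => ?_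
      by_cases hij : i + 1 ≤ j
      · exact algPow_anti K A hij
      · have : i + 1 = j + (i + 1 - j) := by omega
        rw [this, hall]
    · have h2 := iInf_le (fun i => algPow K A (i + 1)) (j - 1)
      rwa [Nat.sub_add_cancel hj] at h2
  haveI : Module.Finite K (A ⧸ algPow K A j) := quot_finite K A hFG j
  exact hNF (Module.Finite.equiv (Submodule.quotEquivOfEqBot _ hbot))

lemma alg_d_lb (hNF : ¬ Module.Finite K A)
    (hFG : ∃ F : Finset A, NonUnitalAlgebra.adjoin K (F : Set A) = ⊤)
    (hRN : ⨅ i, algPow K A (i + 1) = ⊥) :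
    ∀ j, j - 1 ≤ Module.finrank K (A ⧸ algPow K A j) := by
  intro j
  induction j with
  | zero => omega
  | succ j ih =>
    rcases Nat.eq_zero_or_pos j with h | h
    · omega
    · have := alg_layer_pos K A hNF hFG hRN h
      have := alg_d_succ K A hFG j
      omega

lemma alg_iff (hNF : ¬ Module.Finite K A)
    (hFG : ∃ F : Finset A, NonUnitalAlgebra.adjoin K (F : Set A) = ⊤)
    (hRN : ⨅ i, algPow K A (i + 1) = ⊥) :
    (∃ r, HasCoclassAlg K A r) ↔ ∃ i, ∀ j, i ≤ j → algLayerDim K A j = 1 := by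
  constructor
  · rintro ⟨r, hr⟩
    rw [HasCoclassAlg, Filter.eventually_atTop] at hr
    obtain ⟨i0, hi0⟩ := hr
    refine ⟨max i0 1, fun j hj => ?_⟩
    have e1 : algCcQuot K A j = r := hi0 j (by omega)
    have e2 : algCcQuot K A (j + 1) = r := hi0 (j + 1) (by omega)
    simp only [algCcQuot] at e1 e2
    have lb1 := alg_d_lb K A hNF hFG hRN j
    have lb2 := alg_d_lb K A hNF hFG hRN (j + 1)
    have hd := alg_d_succ K A hFG j
    omega
  · rintro ⟨i, hi⟩
    refine ⟨algCcQuot K A (max i 1), ?_⟩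
    rw [HasCoclassAlg, Filter.eventually_atTop]
    refine ⟨max i 1, fun j hj => ?_⟩
    have key : ∀ k, algCcQuot K A (max i 1 + k) = algCcQuot K A (max i 1) := by
      intro k
      induction k with
      | zero => rfl
      | succ k ih =>
        have hd := alg_d_succ K A hFG (max i 1 + k)
        have hl := hi (max i 1 + k) (by omega)
        rw [← ih]
        simp only [algCcQuot]
        have he : max i 1 + (k + 1) = (max i 1 + k) + 1 := by omega
        rw [he]
        omega
    have he : j = max i 1 + (j - max i 1) := by omega
    rw [he, key]

end AlgMain

/-- A finitely generated residually nilpotent infinite semigroup (respectively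
infinite-dimensional associative algebra) `O` has finite coclass if and only if there is
an `i ∈ ℕ` such that `|Oʲ \ Oʲ⁺¹| = 1` (respectively `dim (Oʲ/Oʲ⁺¹) = 1`) for all
`j ≥ i`. -/
theorem statement19 :
    (∀ (S : Type) [SemigroupWithZero S] [Infinite S],
       FGSemigroup S → ResiduallyNilpotent S →
       ((∃ r, HasCoclassSg S r) ↔
         ∃ i, ∀ j, i ≤ j → (sgPow S j \ sgPow S (j + 1)).ncard = 1)) ∧
    (∀ (K A : Type) [Field K] [NonUnitalRing A] [Module K A]
       [SMulCommClass K A A] [IsScalarTower K A A],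
       ¬ Module.Finite K A →
       (∃ F : Finset A, NonUnitalAlgebra.adjoin K (F : Set A) = ⊤) →
       (⨅ i, algPow K A (i + 1) = ⊥) →
       ((∃ r, HasCoclassAlg K A r) ↔
         ∃ i, ∀ j, i ≤ j → algLayerDim K A j = 1)) := by
  constructor
  · intro S _ _ hFG hRN
    exact sg_iff hFG hRN
  · intro K A _ _ _ _ _ hNF hFG hRN
    exact alg_iff K A hNF hFG hRN
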